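/- Consider a VSP instance with n vehicles, walks W_j^1,…,W_j^{q_j}, trip request times ρ_j, soft deadlines d_j, hard deadlines d'_j, minimum travel times τ_min,j^i, maximum travel times τ_max,j^i, and separation constants s_{j1,j2}^{i1,i2} ≥ 0, and suppose the big-M constants satisfy M_{j1,j2}^{i1,i2} ≥ max_j d'_j − min_j ρ_j for every constrained pair and M_j ≥ max(d_j − ρ_j, d'_j − d_j) for every j. Then for every natural number m, there exists an assignment of all MIP variables (t, P, N, b, X, l) satisfying all MIP constraints with ∑_j l_j ≤ m if and only if there exists a VSP-feasible schedule t whose number of tardy vehicles, i.e. the cardinality of {j : t_j^{q_j} > d_j}, is at most m. Consequently the optimal value of the MIP objective ∑_j l_j equals the minimum number of tardy vehicles over all VSP-feasible schedules. -/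

import Mathlib

/-- VSP-feasibility of a schedule `t`: trip request time, trip continuity and
hard deadline chain `ρ_j ≤ t_j^1 ≤ … ≤ t_j^{q_j} ≤ d'_j`; travel times
`τmin_j^i ≤ t_j^{i+1} − t_j^i ≤ τmax_j^i`; and separation
`|t_{j1}^{i1} − t_{j2}^{i2}| ≥ s` at coinciding walk vertices. -/
def VSPFeasible {n : ℕ} {V : Type} (q : Fin n → ℕ) (hq : ∀ j, 0 < q j)
    (W : (j : Fin n) → Fin (q j) → V)
    (ρ d' : Fin n → ℝ)
    (τmin τmax : (j : Fin n) → Fin (q j) → ℝ)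
    (s : (j1 j2 : Fin n) → Fin (q j1) → Fin (q j2) → ℝ)
    (t : (j : Fin n) → Fin (q j) → ℝ) : Prop :=
  (∀ j, ρ j ≤ t j ⟨0, hq j⟩) ∧
  (∀ (j : Fin n) (i : Fin (q j)) (h : i.val + 1 < q j), t j i ≤ t j ⟨i.val + 1, h⟩) ∧
  (∀ j, t j ⟨q j - 1, Nat.sub_lt (hq j) Nat.one_pos⟩ ≤ d' j) ∧
  (∀ (j : Fin n) (i : Fin (q j)) (h : i.val + 1 < q j),
      τmin j i ≤ t j ⟨i.val + 1, h⟩ - t j i ∧ t j ⟨i.val + 1, h⟩ - t j i ≤ τmax j i) ∧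
  (∀ (j1 j2 : Fin n) (i1 : Fin (q j1)) (i2 : Fin (q j2)),
      j1 ≠ j2 → W j1 i1 = W j2 i2 → |t j1 i1 - t j2 i2| ≥ s j1 j2 i1 i2)

/-- The MIP constraints of the VSP formulation: the chain, travel-time and
hard-deadline constraints on `t`; the big-M linearization
`t_{j1}^{i1} − t_{j2}^{i2} = P − N`, `b·s ≤ P ≤ b·M`, `(1−b)·s ≤ N ≤ (1−b)·M`
with binary `b` for every constrained pair; and the tardiness constraints
`d_j − t_j^{q_j} ≤ X_j`, `0 ≤ X_j`, `X_j ≤ M_j·(1 − l_j)`,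
`X_j ≤ d_j − t_j^{q_j} + M_j·l_j` with binary `l_j` for every vehicle. -/
def MIPConstraints {n : ℕ} {V : Type} (q : Fin n → ℕ) (hq : ∀ j, 0 < q j)
    (W : (j : Fin n) → Fin (q j) → V)
    (ρ d d' : Fin n → ℝ)
    (τmin τmax : (j : Fin n) → Fin (q j) → ℝ)
    (s Msep : (j1 j2 : Fin n) → Fin (q j1) → Fin (q j2) → ℝ)
    (Mveh : Fin n → ℝ)
    (t : (j : Fin n) → Fin (q j) → ℝ)
    (P N b : (j1 j2 : Fin n) → Fin (q j1) → Fin (q j2) → ℝ)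
    (X l : Fin n → ℝ) : Prop :=
  (∀ j, ρ j ≤ t j ⟨0, hq j⟩) ∧
  (∀ (j : Fin n) (i : Fin (q j)) (h : i.val + 1 < q j), t j i ≤ t j ⟨i.val + 1, h⟩) ∧
  (∀ j, t j ⟨q j - 1, Nat.sub_lt (hq j) Nat.one_pos⟩ ≤ d' j) ∧
  (∀ (j : Fin n) (i : Fin (q j)) (h : i.val + 1 < q j),
      τmin j i ≤ t j ⟨i.val + 1, h⟩ - t j i ∧ t j ⟨i.val + 1, h⟩ - t j i ≤ τmax j i) ∧
  (∀ (j1 j2 : Fin n) (i1 : Fin (q j1)) (i2 : Fin (q j2)),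
      j1 ≠ j2 → W j1 i1 = W j2 i2 →
      (b j1 j2 i1 i2 = 0 ∨ b j1 j2 i1 i2 = 1) ∧
      t j1 i1 - t j2 i2 = P j1 j2 i1 i2 - N j1 j2 i1 i2 ∧
      b j1 j2 i1 i2 * s j1 j2 i1 i2 ≤ P j1 j2 i1 i2 ∧
      P j1 j2 i1 i2 ≤ b j1 j2 i1 i2 * Msep j1 j2 i1 i2 ∧
      (1 - b j1 j2 i1 i2) * s j1 j2 i1 i2 ≤ N j1 j2 i1 i2 ∧
      N j1 j2 i1 i2 ≤ (1 - b j1 j2 i1 i2) * Msep j1 j2 i1 i2) ∧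
  (∀ j, (l j = 0 ∨ l j = 1) ∧
      d j - t j ⟨q j - 1, Nat.sub_lt (hq j) Nat.one_pos⟩ ≤ X j ∧
      0 ≤ X j ∧
      X j ≤ Mveh j * (1 - l j) ∧
      X j ≤ d j - t j ⟨q j - 1, Nat.sub_lt (hq j) Nat.one_pos⟩ + Mveh j * l j)


lemma chain_mono {k : ℕ} (f : Fin k → ℝ)
    (h : ∀ (i : Fin k) (hh : i.val + 1 < k), f i ≤ f ⟨i.val + 1, hh⟩) :
    ∀ (a b : Fin k), a.val ≤ b.val → f a ≤ f b := by
  intro a b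
  obtain ⟨bv, hb⟩ := b
  induction bv with
  | zero =>
    intro hab
    have : a = ⟨0, hb⟩ := Fin.ext (Nat.le_zero.mp hab)
    rw [this]
  | succ m ih =>
    intro hab
    rcases Nat.lt_or_ge a.val (m + 1) with h1 | h1
    · have hm : m < k := lt_of_le_of_lt (Nat.le_succ m) hb
      exact le_trans (ih hm (Nat.lt_succ_iff.mp h1)) (h ⟨m, hm⟩ hb)
    · have : a = ⟨m + 1, hb⟩ := Fin.ext (le_antisymm hab h1)
      rw [this]

lemma mip_to_vsp {n : ℕ} {V : Type} (q : Fin n → ℕ) (hq : ∀ j, 0 < q j)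
    (W : (j : Fin n) → Fin (q j) → V)
    (ρ d d' : Fin n → ℝ)
    (τmin τmax : (j : Fin n) → Fin (q j) → ℝ)
    (s Msep : (j1 j2 : Fin n) → Fin (q j1) → Fin (q j2) → ℝ)
    (Mveh : Fin n → ℝ)
    (hs : ∀ (j1 j2 : Fin n) (i1 : Fin (q j1)) (i2 : Fin (q j2)),
        j1 ≠ j2 → W j1 i1 = W j2 i2 → 0 ≤ s j1 j2 i1 i2)
    (t : (j : Fin n) → Fin (q j) → ℝ)
    (P N b : (j1 j2 : Fin n) → Fin (q j1) → Fin (q j2) → ℝ)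
    (X l : Fin n → ℝ)
    (hmip : MIPConstraints q hq W ρ d d' τmin τmax s Msep Mveh t P N b X l) :
    VSPFeasible q hq W ρ d' τmin τmax s t ∧
    ((Finset.univ.filter
        (fun j : Fin n =>
          d j < t j ⟨q j - 1, Nat.sub_lt (hq j) Nat.one_pos⟩)).card : ℝ) ≤ ∑ j, l j := by
  obtain ⟨h1, h2, h3, h4, hsep, htar⟩ := hmip
  constructor
  · refine ⟨h1, h2, h3, h4, ?_⟩
    intro j1 j2 i1 i2 hne hW
    obtain ⟨hb, heq, hP1, hP2, hN1, hN2⟩ := hsep j1 j2 i1 i2 hne hW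
    have hs0 := hs j1 j2 i1 i2 hne hW
    rcases hb with hb | hb
    · rw [hb] at hP1 hP2 hN1 hN2
      simp only [zero_mul, one_mul, sub_zero, one_mul] at hP1 hP2 hN1 hN2
      have hP : P j1 j2 i1 i2 = 0 := le_antisymm hP2 hP1
      rw [hP, zero_sub] at heq
      rw [heq, abs_neg, abs_of_nonneg (le_trans hs0 hN1)]
      exact hN1
    · rw [hb] at hP1 hP2 hN1 hN2
      simp only [one_mul, sub_self, zero_mul] at hP1 hP2 hN1 hN2
      have hN : N j1 j2 i1 i2 = 0 := le_antisymm hN2 hN1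
      rw [hN, sub_zero] at heq
      rw [heq, abs_of_nonneg (le_trans hs0 hP1)]
      exact hP1
  · have hl01 : ∀ j, l j = 0 ∨ l j = 1 := fun j => (htar j).1
    have hkey : ∀ j ∈ Finset.univ.filter
        (fun j : Fin n => d j < t j ⟨q j - 1, Nat.sub_lt (hq j) Nat.one_pos⟩),
        (1 : ℝ) ≤ l j := by
      intro j hj
      rw [Finset.mem_filter] at hj
      obtain ⟨hl, hX1, hX2, hX3, hX4⟩ := htar j
      rcases hl with hl | hl
      · exfalso
        rw [hl, mul_zero, add_zero] at hX4
        linarith [hj.2]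
      · rw [hl]
    calc ((Finset.univ.filter
        (fun j : Fin n => d j < t j ⟨q j - 1, Nat.sub_lt (hq j) Nat.one_pos⟩)).card : ℝ)
        = ∑ j ∈ Finset.univ.filter
            (fun j : Fin n => d j < t j ⟨q j - 1, Nat.sub_lt (hq j) Nat.one_pos⟩), (1 : ℝ) := by
          simp
      _ ≤ ∑ j ∈ Finset.univ.filter
            (fun j : Fin n => d j < t j ⟨q j - 1, Nat.sub_lt (hq j) Nat.one_pos⟩), l j :=
          Finset.sum_le_sum hkey
      _ ≤ ∑ j, l j := by
          apply Finset.sum_le_sum_of_subset_of_nonneg (Finset.filter_subset _ _)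
          intro j _ _
          rcases hl01 j with h | h <;> rw [h] <;> norm_num

lemma vsp_to_mip {n : ℕ} {V : Type} (q : Fin n → ℕ) (hq : ∀ j, 0 < q j)
    (W : (j : Fin n) → Fin (q j) → V)
    (ρ d d' : Fin n → ℝ)
    (τmin τmax : (j : Fin n) → Fin (q j) → ℝ)
    (s Msep : (j1 j2 : Fin n) → Fin (q j1) → Fin (q j2) → ℝ)
    (Mveh : Fin n → ℝ)
    (hs : ∀ (j1 j2 : Fin n) (i1 : Fin (q j1)) (i2 : Fin (q j2)),
        j1 ≠ j2 → W j1 i1 = W j2 i2 → 0 ≤ s j1 j2 i1 i2)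
    (hMsep : ∀ (j1 j2 : Fin n) (i1 : Fin (q j1)) (i2 : Fin (q j2)),
        j1 ≠ j2 → W j1 i1 = W j2 i2 →
        ∀ j' j'' : Fin n, d' j' - ρ j'' ≤ Msep j1 j2 i1 i2)
    (hMveh : ∀ j : Fin n, d j - ρ j ≤ Mveh j ∧ d' j - d j ≤ Mveh j)
    (t : (j : Fin n) → Fin (q j) → ℝ)
    (hvsp : VSPFeasible q hq W ρ d' τmin τmax s t) :
    ∃ (P N b : (j1 j2 : Fin n) → Fin (q j1) → Fin (q j2) → ℝ) (X l : Fin n → ℝ),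
      MIPConstraints q hq W ρ d d' τmin τmax s Msep Mveh t P N b X l ∧
      ∑ j, l j = ((Finset.univ.filter
        (fun j : Fin n =>
          d j < t j ⟨q j - 1, Nat.sub_lt (hq j) Nat.one_pos⟩)).card : ℝ) := by
  classical
  obtain ⟨h1, h2, h3, h4, h5⟩ := hvsp
  -- bounds: ρ j ≤ t j i ≤ d' j
  have hmono : ∀ (j : Fin n) (a c : Fin (q j)), a.val ≤ c.val → t j a ≤ t j c :=
    fun j => chain_mono (t j) (h2 j)
  have hlo : ∀ (j : Fin n) (i : Fin (q j)), ρ j ≤ t j i := by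
    intro j i
    exact le_trans (h1 j) (hmono j ⟨0, hq j⟩ i (Nat.zero_le _))
  have hhi : ∀ (j : Fin n) (i : Fin (q j)), t j i ≤ d' j := by
    intro j i
    refine le_trans (hmono j i ⟨q j - 1, Nat.sub_lt (hq j) Nat.one_pos⟩ ?_) (h3 j)
    exact Nat.le_sub_one_of_lt i.isLt
  refine ⟨fun j1 j2 i1 i2 => max (t j1 i1 - t j2 i2) 0,
      fun j1 j2 i1 i2 => max (t j2 i2 - t j1 i1) 0,
      fun j1 j2 i1 i2 => if 0 ≤ t j1 i1 - t j2 i2 then 1 else 0,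
      fun j => if d j < t j ⟨q j - 1, Nat.sub_lt (hq j) Nat.one_pos⟩ then 0
        else d j - t j ⟨q j - 1, Nat.sub_lt (hq j) Nat.one_pos⟩,
      fun j => if d j < t j ⟨q j - 1, Nat.sub_lt (hq j) Nat.one_pos⟩ then 1 else 0,
      ⟨h1, h2, h3, h4, ?_, ?_⟩, ?_⟩
  · intro j1 j2 i1 i2 hne hW
    have habs := h5 j1 j2 i1 i2 hne hW
    have hs0 := hs j1 j2 i1 i2 hne hW
    have hM12 := hMsep j1 j2 i1 i2 hne hW j1 j2
    have hM21 := hMsep j1 j2 i1 i2 hne hW j2 j1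
    by_cases hc : 0 ≤ t j1 i1 - t j2 i2
    · simp only [if_pos hc]
      have hPx : max (t j1 i1 - t j2 i2) 0 = t j1 i1 - t j2 i2 := max_eq_left hc
      have hNx : max (t j2 i2 - t j1 i1) 0 = 0 := max_eq_right (by linarith)
      rw [abs_of_nonneg hc] at habs
      refine ⟨Or.inr (by norm_num), by rw [hPx, hNx]; ring, ?_, ?_, ?_, ?_⟩
      · rw [hPx, one_mul]; exact habs
      · rw [hPx, one_mul]
        have := hhi j1 i1
        have := hlo j2 i2
        linarith
      · rw [hNx]; simp
      · rw [hNx]; simp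
    · simp only [if_neg hc]
      push_neg at hc
      have hPx : max (t j1 i1 - t j2 i2) 0 = 0 := max_eq_right (le_of_lt hc)
      have hNx : max (t j2 i2 - t j1 i1) 0 = t j2 i2 - t j1 i1 :=
        max_eq_left (by linarith)
      rw [abs_of_neg hc] at habs
      refine ⟨Or.inl (by norm_num), by rw [hPx, hNx]; ring, ?_, ?_, ?_, ?_⟩
      · rw [hPx]; simp
      · rw [hPx]; simp
      · rw [hNx, sub_zero, one_mul]; linarith
      · rw [hNx, sub_zero, one_mul]
        have := hhi j2 i2
        have := hlo j1 i1
        linarith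
  · intro j
    beta_reduce
    set tq := t j ⟨q j - 1, Nat.sub_lt (hq j) Nat.one_pos⟩ with htq
    have hlo' : ρ j ≤ tq := hlo j _
    have hhi' : tq ≤ d' j := hhi j _
    obtain ⟨hM1, hM2⟩ := hMveh j
    by_cases hc : d j < tq
    · simp only [if_pos hc]
      refine ⟨Or.inr (by norm_num), by linarith, le_refl 0, by norm_num, by linarith⟩
    · simp only [if_neg hc]
      push_neg at hc
      refine ⟨Or.inl (by norm_num), le_refl _, by linarith, by linarith, by linarith⟩
  · simp [Finset.sum_boole]

/-- Under nonnegative separation constants and sufficiently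
large big-M constants (`d'_{j'} − ρ_{j''} ≤ M` for every constrained pair and
all `j', j''`, and `d_j − ρ_j ≤ M_j`, `d'_j − d_j ≤ M_j`), for every natural
number `m` there is an assignment of all MIP variables `(t, P, N, b, X, l)`
satisfying all MIP constraints with `∑_j l_j ≤ m` iff there is a VSP-feasible
schedule with at most `m` tardy vehicles. Consequently, the optimal value of
the MIP objective `∑_j l_j` equals the minimum number of tardy vehicles over
all VSP-feasible schedules. -/
theorem mip_optimum_eq_min_tardy_vehicles
    {n : ℕ} {V : Type} (q : Fin n → ℕ) (hq : ∀ j, 0 < q j)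
    (W : (j : Fin n) → Fin (q j) → V)
    (ρ d d' : Fin n → ℝ)
    (τmin τmax : (j : Fin n) → Fin (q j) → ℝ)
    (s Msep : (j1 j2 : Fin n) → Fin (q j1) → Fin (q j2) → ℝ)
    (Mveh : Fin n → ℝ)
    (hs : ∀ (j1 j2 : Fin n) (i1 : Fin (q j1)) (i2 : Fin (q j2)),
        j1 ≠ j2 → W j1 i1 = W j2 i2 → 0 ≤ s j1 j2 i1 i2)
    (hMsep : ∀ (j1 j2 : Fin n) (i1 : Fin (q j1)) (i2 : Fin (q j2)),
        j1 ≠ j2 → W j1 i1 = W j2 i2 →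
        ∀ j' j'' : Fin n, d' j' - ρ j'' ≤ Msep j1 j2 i1 i2)
    (hMveh : ∀ j : Fin n, d j - ρ j ≤ Mveh j ∧ d' j - d j ≤ Mveh j) :
    (∀ m : ℕ,
      (∃ (t : (j : Fin n) → Fin (q j) → ℝ)
         (P N b : (j1 j2 : Fin n) → Fin (q j1) → Fin (q j2) → ℝ)
         (X l : Fin n → ℝ),
        MIPConstraints q hq W ρ d d' τmin τmax s Msep Mveh t P N b X l ∧
        ∑ j, l j ≤ (m : ℝ))
      ↔
      (∃ t : (j : Fin n) → Fin (q j) → ℝ,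
        VSPFeasible q hq W ρ d' τmin τmax s t ∧
        (Finset.univ.filter
          (fun j : Fin n =>
            d j < t j ⟨q j - 1, Nat.sub_lt (hq j) Nat.one_pos⟩)).card ≤ m)) ∧
    sInf {v : ℝ |
        ∃ (t : (j : Fin n) → Fin (q j) → ℝ)
          (P N b : (j1 j2 : Fin n) → Fin (q j1) → Fin (q j2) → ℝ)
          (X l : Fin n → ℝ),
          MIPConstraints q hq W ρ d d' τmin τmax s Msep Mveh t P N b X l ∧
          v = ∑ j, l j} =
      sInf {v : ℝ |
        ∃ t : (j : Fin n) → Fin (q j) → ℝ,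
          VSPFeasible q hq W ρ d' τmin τmax s t ∧
          v = ((Finset.univ.filter
            (fun j : Fin n =>
              d j < t j ⟨q j - 1, Nat.sub_lt (hq j) Nat.one_pos⟩)).card : ℝ)} := by
  constructor
  · intro m
    constructor
    · rintro ⟨t, P, N, b, X, l, hmip, hsum⟩
      obtain ⟨hvsp, hcard⟩ := mip_to_vsp q hq W ρ d d' τmin τmax s Msep Mveh hs t P N b X l hmip
      refine ⟨t, hvsp, ?_⟩
      exact_mod_cast le_trans hcard hsum
    · rintro ⟨t, hvsp, hcard⟩
      obtain ⟨P, N, b, X, l, hmip, hsum⟩ :=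
        vsp_to_mip q hq W ρ d d' τmin τmax s Msep Mveh hs hMsep hMveh t hvsp
      refine ⟨t, P, N, b, X, l, hmip, ?_⟩
      rw [hsum]
      exact_mod_cast hcard
  · set A := {v : ℝ |
        ∃ (t : (j : Fin n) → Fin (q j) → ℝ)
          (P N b : (j1 j2 : Fin n) → Fin (q j1) → Fin (q j2) → ℝ)
          (X l : Fin n → ℝ),
          MIPConstraints q hq W ρ d d' τmin τmax s Msep Mveh t P N b X l ∧
          v = ∑ j, l j} with hA
    set B := {v : ℝ |
        ∃ t : (j : Fin n) → Fin (q j) → ℝ,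
          VSPFeasible q hq W ρ d' τmin τmax s t ∧
          v = ((Finset.univ.filter
            (fun j : Fin n =>
              d j < t j ⟨q j - 1, Nat.sub_lt (hq j) Nat.one_pos⟩)).card : ℝ)} with hB
    have hBA : B ⊆ A := by
      rintro v ⟨t, hvsp, rfl⟩
      obtain ⟨P, N, b, X, l, hmip, hsum⟩ :=
        vsp_to_mip q hq W ρ d d' τmin τmax s Msep Mveh hs hMsep hMveh t hvsp
      exact ⟨t, P, N, b, X, l, hmip, hsum.symm⟩
    have hAb : ∀ v ∈ A, ∃ w ∈ B, w ≤ v := by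
      rintro v ⟨t, P, N, b, X, l, hmip, rfl⟩
      obtain ⟨hvsp, hcard⟩ := mip_to_vsp q hq W ρ d d' τmin τmax s Msep Mveh hs t P N b X l hmip
      exact ⟨_, ⟨t, hvsp, rfl⟩, hcard⟩
    have hbddA : BddBelow A := by
      refine ⟨0, ?_⟩
      rintro v ⟨t, P, N, b, X, l, hmip, rfl⟩
      apply Finset.sum_nonneg
      intro j _
      rcases (hmip.2.2.2.2.2 j).1 with h | h <;> rw [h]
      norm_num
    have hbddB : BddBelow B := by
      refine ⟨0, ?_⟩
      rintro v ⟨t, hvsp, rfl⟩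
      positivity
    rcases Set.eq_empty_or_nonempty A with hAe | hAne
    · have hBe : B = ∅ := Set.subset_eq_empty hBA hAe
      rw [hAe, hBe]
    · obtain ⟨a, ha⟩ := hAne
      obtain ⟨w, hw, _⟩ := hAb a ha
      have hBne : B.Nonempty := ⟨w, hw⟩
      apply le_antisymm
      · exact csInf_le_csInf hbddA hBne hBA
      · apply le_csInf ⟨a, ha⟩
        intro v hv
        obtain ⟨w', hw', hle⟩ := hAb v hv
        exact le_trans (csInf_le hbddB hw') hle
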